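/- arXiv:1907.13585 — 2 statements merged into one kernel-verified Lean document; each statement's English description precedes it below -/
import Mathlib

section
/- Let T ∈ (0,∞) and T* ∈ (0,∞) with T* ∉ ℚ·T, and let (T*_n)_{n∈ℕ} be a real sequence with T*_n − T*_{n−1} → T* as n → ∞. Then for every ε > 0 there exist m, n ∈ ℕ such that |T*_n − m·T| < ε. -/
/-- Stepping lemma: walking with positive step `σ` from `x`, within `⌈T/σ⌉₊` steps
we land within `σ` above a multiple of `T`. -/
lemma step_lemma (T σ : ℝ) (hT : 0 < T) (hσ : 0 < σ) (x : ℝ) :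
    ∃ j : ℕ, j ≤ ⌈T / σ⌉₊ ∧ ∃ m : ℤ, 0 ≤ x + j * σ - m * T ∧ x + j * σ - m * T < σ := by
  set m : ℤ := ⌈x / T⌉ with hm
  have h1 : x ≤ m * T := by
    rw [← div_le_iff₀ hT]; exact Int.le_ceil _
  have h2 : (m : ℝ) * T < x + T := by
    have := Int.ceil_lt_add_one (x / T)
    calc (m : ℝ) * T < (x / T + 1) * T := by nlinarith
      _ = x + T := by field_simp
  have hr0 : 0 ≤ (m * T - x) / σ := div_nonneg (by linarith) hσ.le
  refine ⟨⌈(m * T - x) / σ⌉₊, ?_, m, ?_, ?_⟩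
  · apply Nat.ceil_le_ceil
    gcongr
    linarith
  · have := Nat.le_ceil ((m * T - x) / σ)
    rw [div_le_iff₀ hσ] at this
    linarith
  · have h4 := Nat.ceil_lt_add_one hr0
    have h5 : ((⌈(m * T - x) / σ⌉₊ : ℝ)) * σ < ((m * T - x) / σ + 1) * σ :=
      mul_lt_mul_of_pos_right h4 hσ
    have h6 : ((m * T - x) / σ + 1) * σ = m * T - x + σ := by field_simp
    linarith

/-- Uniform Kronecker: there is a uniform bound `K` such that from any starting
point `x`, at most `K` additions of `Tstar` bring us within `c` of a multiple of `T`. -/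
lemma kron_uniform (T Tstar : ℝ) (hT : 0 < T) (hirr : Irrational (Tstar / T))
    (c : ℝ) (hc : 0 < c) (hcT : c ≤ T) :
    ∃ K : ℕ, ∀ x : ℝ, ∃ k : ℕ, k ≤ K ∧ ∃ m : ℤ, |x + k * Tstar - m * T| < c := by
  -- find p q : ℤ with 0 < p*Tstar + q*T < c
  obtain ⟨p, q, hg0, hgc⟩ : ∃ p q : ℤ, 0 < p * Tstar + q * T ∧ p * Tstar + q * T < c := by
    rcases (AddSubgroup.closure ({Tstar, T} : Set ℝ)).dense_or_cyclic with hd | ⟨g, hcyc⟩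
    · obtain ⟨y, hyS, hy⟩ := hd.exists_mem_open isOpen_Ioo
        (⟨c / 2, by constructor <;> linarith⟩ : (Set.Ioo (0:ℝ) c).Nonempty)
      obtain ⟨p, q, hpq⟩ := AddSubgroup.mem_closure_pair.mp hyS
      simp only [zsmul_eq_mul] at hpq
      exact ⟨p, q, hpq ▸ hy.1, hpq ▸ hy.2⟩
    · exfalso
      have hTs : Tstar ∈ AddSubgroup.closure ({Tstar, T} : Set ℝ) :=
        AddSubgroup.subset_closure (by simp)
      have hTm : T ∈ AddSubgroup.closure ({Tstar, T} : Set ℝ) :=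
        AddSubgroup.subset_closure (by simp)
      rw [hcyc, AddSubgroup.mem_closure_singleton] at hTs hTm
      obtain ⟨p, hp⟩ := hTs; obtain ⟨q, hq⟩ := hTm
      simp only [zsmul_eq_mul] at hp hq
      have hgne : g ≠ 0 := by rintro rfl; simp at hq; exact hT.ne' hq.symm
      have hqne : (q : ℝ) ≠ 0 := by rintro h; rw [h] at hq; simp at hq; exact hT.ne' hq.symm
      apply hirr
      refine ⟨(p : ℚ) / q, ?_⟩
      rw [← hp, ← hq]
      push_cast
      rw [div_eq_div_iff hqne (by positivity : (q:ℝ) * g ≠ 0)]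
      ring
  have hpne : p ≠ 0 := by
    rintro rfl
    simp only [Int.cast_zero, zero_mul, zero_add] at hg0 hgc
    have hq1 : (q : ℝ) < 1 := by
      by_contra h
      push_neg at h
      nlinarith
    have : q ≤ 0 := by exact_mod_cast Int.lt_add_one_iff.mp (by exact_mod_cast hq1)
    have hq0 : (q : ℝ) ≤ 0 := by exact_mod_cast this
    nlinarith
  set g : ℝ := p * Tstar + q * T with hgdef
  rcases hpne.lt_or_gt with hpneg | hppos
  · -- p < 0 : descend
    refine ⟨⌈T / g⌉₊ * (-p).toNat, fun x => ?_⟩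
    obtain ⟨j, hjle, m, hml, hmu⟩ := step_lemma T g hT hg0 (-x)
    refine ⟨j * (-p).toNat, Nat.mul_le_mul_right _ hjle, j * q - m, ?_⟩
    have h7 : (((-p).toNat : ℕ) : ℝ) = -(p : ℝ) := by
      exact_mod_cast congrArg (fun z : ℤ => (z : ℝ)) (Int.toNat_of_nonneg (by omega : (0:ℤ) ≤ -p))
    have hcast : ((j * (-p).toNat : ℕ) : ℝ) = (j : ℝ) * (-(p : ℝ)) := by
      push_cast [h7]; ring
    have : x + ((j * (-p).toNat : ℕ) : ℝ) * Tstar - ((j * q - m : ℤ) : ℝ) * T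
        = -((-x) + j * g - m * T) := by
      rw [hcast]; push_cast; rw [hgdef]; ring
    rw [this, abs_neg, abs_of_nonneg hml]
    linarith
  · -- p > 0 : ascend
    refine ⟨⌈T / g⌉₊ * p.toNat, fun x => ?_⟩
    obtain ⟨j, hjle, m, hml, hmu⟩ := step_lemma T g hT hg0 x
    refine ⟨j * p.toNat, Nat.mul_le_mul_right _ hjle, m - j * q, ?_⟩
    have h7 : ((p.toNat : ℕ) : ℝ) = (p : ℝ) := by
      exact_mod_cast congrArg (fun z : ℤ => (z : ℝ)) (Int.toNat_of_nonneg (by omega : (0:ℤ) ≤ p))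
    have hcast : ((j * p.toNat : ℕ) : ℝ) = (j : ℝ) * ((p : ℤ) : ℝ) := by
      push_cast [h7]; ring
    have : x + ((j * p.toNat : ℕ) : ℝ) * Tstar - ((m - j * q : ℤ) : ℝ) * T
        = x + j * g - m * T := by
      rw [hcast]; push_cast; rw [hgdef]; ring
    rw [this, abs_of_nonneg hml]
    linarith

/-- Perturbed Kronecker approximation (Lemma 4.2): if `T > 0`, `T* > 0` with `T*/T`
irrational, and the consecutive differences of the sequence `a` converge to `T*`,
then for every `ε > 0` there are `m n : ℕ` with `|a n - m * T| < ε`. -/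
theorem stmt0 (T Tstar : ℝ) (hT : 0 < T) (hTstar : 0 < Tstar)
    (hirr : Irrational (Tstar / T)) (a : ℕ → ℝ)
    (hdiff : Filter.Tendsto (fun n => a (n + 1) - a n) Filter.atTop (nhds Tstar)) :
    ∀ ε > 0, ∃ m n : ℕ, |a n - m * T| < ε := by
  intro ε hε
  set e : ℝ := min ε T with he_def
  have he : 0 < e := lt_min hε hT
  have heT : e ≤ T := min_le_right _ _
  have heε : e ≤ ε := min_le_left _ _
  obtain ⟨K, hK⟩ := kron_uniform T Tstar hT hirr (e / 2) (by linarith) (by linarith)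
  set δ : ℝ := min (e / (2 * (K + 1))) (Tstar / 2) with hδ_def
  have hδ0 : 0 < δ := lt_min (by positivity) (by positivity)
  have hδTs : δ ≤ Tstar / 2 := min_le_right _ _
  have hδe : δ ≤ e / (2 * (K + 1)) := min_le_left _ _
  obtain ⟨N, hN⟩ := (Metric.tendsto_atTop.mp hdiff) δ hδ0
  simp only [Real.dist_eq] at hN
  -- accumulated error bound
  have key : ∀ b : ℕ, N ≤ b → ∀ j : ℕ, |a (b + j) - a b - j * Tstar| ≤ j * δ := by
    intro b hb j
    induction j with
    | zero => simp
    | succ j ih =>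
      have h1 := hN (b + j) (by omega)
      have heq : a (b + (j + 1)) - a b - ((j : ℝ) + 1) * Tstar
          = (a (b + j + 1) - a (b + j) - Tstar) + (a (b + j) - a b - j * Tstar) := by
        have : b + (j + 1) = b + j + 1 := by omega
        rw [this]; ring
      calc |a (b + (j + 1)) - a b - ((j:ℕ)+1 : ℕ) * Tstar|
          = |(a (b + j + 1) - a (b + j) - Tstar) + (a (b + j) - a b - j * Tstar)| := by
            push_cast; rw [heq]
        _ ≤ |a (b + j + 1) - a (b + j) - Tstar| + |a (b + j) - a b - j * Tstar| := abs_add_le _ _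
        _ ≤ δ + j * δ := add_le_add h1.le ih
        _ = ((j:ℕ)+1 : ℕ) * δ := by push_cast; ring
  -- a is eventually large
  obtain ⟨L, hL⟩ := exists_nat_gt ((-a N) / (Tstar / 2))
  have hLpos : 0 < a (N + L) := by
    have h1 := key N le_rfl L
    have h2 : a (N + L) ≥ a N + L * Tstar - L * δ := by
      have := abs_le.mp h1
      linarith [this.1]
    have h3 : (L : ℝ) * (Tstar / 2) > -a N := by
      rw [gt_iff_lt, ← div_lt_iff₀ (by positivity : (0:ℝ) < Tstar / 2)]
      exact hL
    nlinarith [mul_le_mul_of_nonneg_left hδTs (by positivity : (0:ℝ) ≤ (L:ℝ))]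
  obtain ⟨k, hkK, m, hm⟩ := hK (a (N + L))
  set n : ℕ := N + L + k with hn_def
  have hkey := key (N + L) (by omega) k
  have hkδ : (k : ℝ) * δ < e / 2 := by
    have h1 : (k : ℝ) * δ ≤ K * δ := by
      apply mul_le_mul_of_nonneg_right _ hδ0.le
      exact_mod_cast hkK
    have h2 : (K : ℝ) * δ ≤ K * (e / (2 * (K + 1))) :=
      mul_le_mul_of_nonneg_left hδe (by positivity)
    have h3 : (K : ℝ) * (e / (2 * (K + 1))) < e / 2 := by
      rw [← mul_div_assoc, div_lt_div_iff₀ (by positivity) (by norm_num : (0:ℝ) < 2)]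
      nlinarith [he, (Nat.cast_nonneg K : (0:ℝ) ≤ (K:ℝ))]
    linarith
  have hclose : |a n - m * T| < e := by
    have : |a n - m * T| ≤ |a n - a (N + L) - k * Tstar| + |a (N + L) + k * Tstar - m * T| := by
      have heq : a n - m * T = (a n - a (N + L) - k * Tstar) + (a (N + L) + k * Tstar - m * T) := by
        ring
      rw [heq]; exact abs_add_le _ _
    calc |a n - m * T| ≤ _ := this
      _ < e / 2 + e / 2 := add_lt_add_of_le_of_lt (le_trans hkey hkδ.le) hm
      _ = e := by ring
  have hanpos : 0 < a n := by
    have h1 := (abs_le.mp hkey).1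
    have h2 : (0:ℝ) ≤ k * Tstar - k * δ := by
      have : δ ≤ Tstar := by linarith
      nlinarith [(Nat.cast_nonneg k : (0:ℝ) ≤ k)]
    linarith
  have hm0 : 0 ≤ m := by
    have h1 : (m : ℝ) * T > a n - e := by
      have := (abs_lt.mp hclose).2
      linarith
    have h2 : (m : ℝ) * T > -T := by linarith
    by_contra h
    push_neg at h
    have : m ≤ -1 := by omega
    have : (m : ℝ) ≤ -1 := by exact_mod_cast this
    nlinarith
  refine ⟨m.toNat, n, ?_⟩
  have hcast : ((m.toNat : ℕ) : ℝ) = (m : ℝ) := by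
    exact_mod_cast congrArg (fun z : ℤ => (z : ℝ)) (Int.toNat_of_nonneg hm0)
  rw [hcast]
  linarith
end

section
/- Let W₁, W₂ : ℝ^{N+L} → ℝ^{N+L} be C¹ vector fields and a₁, a₂ : ℝ^N → ℝ be C¹ functions. Define vector fields on ℝ^{N+L+N} by U_i(x,y,z) := a_i(z)·(W_i(x,y), 0_N) for i = 1,2. Then [U₁, U₂](x,y,z) = a₁(z)·a₂(z)·([W₁,W₂](x,y), 0_N). -/
/-- The Lie bracket `[V,W] = J_W V - J_V W` of vector fields. -/
noncomputable def lieBracket {E : Type*} [NormedAddCommGroup E] [NormedSpace ℝ E]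
    (V W : E → E) (p : E) : E :=
  fderiv ℝ W p (V p) - fderiv ℝ V p (W p)

/-- Part 2 of Lemma 4.4: for C¹ vector fields `W₁ W₂` on `ℝ^{N+L}` (realized as
`ℝ^N × ℝ^L`) and C¹ scalar functions `a₁ a₂ : ℝ^N → ℝ`, the vector fields
`Uᵢ(φ,z) = aᵢ(z) • (Wᵢ(φ), 0)` on `(ℝ^N × ℝ^L) × ℝ^N` satisfy
`[U₁,U₂](φ,z) = a₁(z)a₂(z) • ([W₁,W₂](φ), 0)`. -/
theorem stmt4 (N L : ℕ)
    (W₁ W₂ : (Fin N → ℝ) × (Fin L → ℝ) → (Fin N → ℝ) × (Fin L → ℝ))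
    (a₁ a₂ : (Fin N → ℝ) → ℝ)
    (hW₁ : ContDiff ℝ 1 W₁) (hW₂ : ContDiff ℝ 1 W₂)
    (ha₁ : ContDiff ℝ 1 a₁) (ha₂ : ContDiff ℝ 1 a₂)
    (φ : (Fin N → ℝ) × (Fin L → ℝ)) (z : Fin N → ℝ) :
    lieBracket
      (fun p : ((Fin N → ℝ) × (Fin L → ℝ)) × (Fin N → ℝ) =>
        a₁ p.2 • ((W₁ p.1, 0) : ((Fin N → ℝ) × (Fin L → ℝ)) × (Fin N → ℝ)))
      (fun p : ((Fin N → ℝ) × (Fin L → ℝ)) × (Fin N → ℝ) =>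
        a₂ p.2 • ((W₂ p.1, 0) : ((Fin N → ℝ) × (Fin L → ℝ)) × (Fin N → ℝ)))
      (φ, z)
    = (a₁ z * a₂ z) • ((lieBracket W₁ W₂ φ, 0) :
        ((Fin N → ℝ) × (Fin L → ℝ)) × (Fin N → ℝ)) := by
  have hW₁' : HasFDerivAt W₁ (fderiv ℝ W₁ φ) φ :=
    (hW₁.differentiable one_ne_zero φ).hasFDerivAt
  have hW₂' : HasFDerivAt W₂ (fderiv ℝ W₂ φ) φ :=
    (hW₂.differentiable one_ne_zero φ).hasFDerivAt
  have ha₁' : HasFDerivAt a₁ (fderiv ℝ a₁ z) z :=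
    (ha₁.differentiable one_ne_zero z).hasFDerivAt
  have ha₂' : HasFDerivAt a₂ (fderiv ℝ a₂ z) z :=
    (ha₂.differentiable one_ne_zero z).hasFDerivAt
  have hg₁ : HasFDerivAt (fun p : ((Fin N → ℝ) × (Fin L → ℝ)) × (Fin N → ℝ) => ((W₁ p.1, 0) : ((Fin N → ℝ) × (Fin L → ℝ)) × (Fin N → ℝ)))
      (((fderiv ℝ W₁ φ).comp (ContinuousLinearMap.fst ℝ ((Fin N → ℝ) × (Fin L → ℝ)) (Fin N → ℝ))).prod 0) (φ, z) :=
    HasFDerivAt.prodMk (hW₁'.comp (φ, z) (hasFDerivAt_fst)) (hasFDerivAt_const 0 (φ, z))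
  have hg₂ : HasFDerivAt (fun p : ((Fin N → ℝ) × (Fin L → ℝ)) × (Fin N → ℝ) => ((W₂ p.1, 0) : ((Fin N → ℝ) × (Fin L → ℝ)) × (Fin N → ℝ)))
      (((fderiv ℝ W₂ φ).comp (ContinuousLinearMap.fst ℝ ((Fin N → ℝ) × (Fin L → ℝ)) (Fin N → ℝ))).prod 0) (φ, z) :=
    HasFDerivAt.prodMk (hW₂'.comp (φ, z) (hasFDerivAt_fst)) (hasFDerivAt_const 0 (φ, z))
  have hc₁ : HasFDerivAt (fun p : ((Fin N → ℝ) × (Fin L → ℝ)) × (Fin N → ℝ) => a₁ p.2)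
      ((fderiv ℝ a₁ z).comp (ContinuousLinearMap.snd ℝ ((Fin N → ℝ) × (Fin L → ℝ)) (Fin N → ℝ))) (φ, z) :=
    ha₁'.comp (φ, z) (hasFDerivAt_snd)
  have hc₂ : HasFDerivAt (fun p : ((Fin N → ℝ) × (Fin L → ℝ)) × (Fin N → ℝ) => a₂ p.2)
      ((fderiv ℝ a₂ z).comp (ContinuousLinearMap.snd ℝ ((Fin N → ℝ) × (Fin L → ℝ)) (Fin N → ℝ))) (φ, z) :=
    ha₂'.comp (φ, z) (hasFDerivAt_snd)
  have hU₁ : HasFDerivAt (fun p : ((Fin N → ℝ) × (Fin L → ℝ)) × (Fin N → ℝ) => a₁ p.2 • ((W₁ p.1, 0) : ((Fin N → ℝ) × (Fin L → ℝ)) × (Fin N → ℝ))) _ (φ, z) := hc₁.smul hg₁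
  have hU₂ : HasFDerivAt (fun p : ((Fin N → ℝ) × (Fin L → ℝ)) × (Fin N → ℝ) => a₂ p.2 • ((W₂ p.1, 0) : ((Fin N → ℝ) × (Fin L → ℝ)) × (Fin N → ℝ))) _ (φ, z) := hc₂.smul hg₂
  rw [lieBracket, hU₁.fderiv, hU₂.fderiv]
  simp only [lieBracket, ContinuousLinearMap.add_apply, ContinuousLinearMap.smul_apply,
    ContinuousLinearMap.smulRight_apply, ContinuousLinearMap.comp_apply,
    ContinuousLinearMap.prod_apply, ContinuousLinearMap.coe_fst',
    ContinuousLinearMap.coe_snd', ContinuousLinearMap.zero_apply,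
    Prod.smul_mk, smul_zero, map_smul, map_zero, zero_smul, add_zero]
  ext <;> simp [smul_smul, mul_comm, mul_sub, mul_add, sub_eq_add_neg]
end
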